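/- Suppose M, N, K > 0 and g(p) = -(p + N - M/2)² + M²/4 - MN has two roots p₁' < p₂' both lying in (0,1), with f(p₁') < 0 and f(p₂') > 0 where f(p) = -ln p - M/(N+p) - K. Then f has exactly three roots in (0,1), one in each of the intervals (0, p₁'), (p₁', p₂'), (p₂', 1). -/

import Mathlib

open Real Set

theorem stmt3 (M N K p₁ p₂ : ℝ) (hM : 0 < M) (hN : 0 < N) (hK : 0 < K)
    (f g : ℝ → ℝ)
    (hf : ∀ p, f p = -Real.log p - M / (N + p) - K)
    (hg : ∀ p, g p = -(p + N - M / 2) ^ 2 + M ^ 2 / 4 - M * N)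
    (h0 : 0 < p₁) (h12 : p₁ < p₂) (h21 : p₂ < 1)
    (hg1 : g p₁ = 0) (hg2 : g p₂ = 0)
    (hf1 : f p₁ < 0) (hf2 : 0 < f p₂) :
    (∃! p : ℝ, p ∈ Ioo 0 p₁ ∧ f p = 0) ∧
    (∃! p : ℝ, p ∈ Ioo p₁ p₂ ∧ f p = 0) ∧
    (∃! p : ℝ, p ∈ Ioo p₂ 1 ∧ f p = 0) ∧
    (∀ p ∈ Ioo (0:ℝ) 1, f p = 0 → p ∈ Ioo 0 p₁ ∪ Ioo p₁ p₂ ∪ Ioo p₂ 1) := by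
  -- factor the quadratic
  have e1 : -(p₁ + N - M/2)^2 + M^2/4 - M*N = 0 := by rw [← hg]; exact hg1
  have e2 : -(p₂ + N - M/2)^2 + M^2/4 - M*N = 0 := by rw [← hg]; exact hg2
  have hne : p₂ - p₁ ≠ 0 := sub_ne_zero.mpr (ne_of_gt h12)
  have hmul : (p₂ - p₁) * (p₁ + p₂ + 2*N - M) = 0 := by linear_combination e1 - e2
  have hsum : p₁ + p₂ + 2*N - M = 0 := by
    rcases mul_eq_zero.mp hmul with h | h
    · exact absurd h hne
    · exact h
  have hprod : p₁ * p₂ = N^2 := by linear_combination e1 + p₁ * hsum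
  have hfact : ∀ x : ℝ, M*x - (N+x)^2 = -(x - p₁) * (x - p₂) := by
    intro x
    linear_combination (-x) * hsum + hprod
  -- derivative
  have hder : ∀ x : ℝ, 0 < x → HasDerivAt f (-(1/x) + M/(N+x)^2) x := by
    intro x hx
    have hNx : N + x ≠ 0 := by positivity
    have h1 : HasDerivAt Real.log x⁻¹ x := Real.hasDerivAt_log (ne_of_gt hx)
    have h2 : HasDerivAt (fun p : ℝ => N + p) 1 x := (hasDerivAt_id x).const_add N
    have h3 : HasDerivAt (fun p : ℝ => (N + p)⁻¹) (-1 / (N + x)^2) x := by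
      simpa [Pi.inv_def] using h2.inv hNx
    have h4 : HasDerivAt (fun p : ℝ => M * (N + p)⁻¹) (M * (-1 / (N + x)^2)) x :=
      h3.const_mul M
    have h5 : HasDerivAt (fun p : ℝ => -Real.log p - M * (N + p)⁻¹ - K)
        (-x⁻¹ - M * (-1 / (N + x)^2)) x := (h1.neg.sub h4).sub_const K
    have hfe : f = fun p : ℝ => -Real.log p - M / (N + p) - K := funext hf
    rw [hfe]
    simp only [div_eq_mul_inv]
    convert h5 using 1
    field_simp
    ring
  -- derivative signs
  have hderiv_left : ∀ x ∈ Ioo (0:ℝ) p₁, deriv f x < 0 := by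
    intro x hx
    rw [(hder x hx.1).deriv]
    have hgx : M*x - (N+x)^2 < 0 := by
      rw [hfact x]; nlinarith [hx.1, hx.2, h12]
    have hxpos : 0 < x := hx.1
    have hNxpos : 0 < N + x := by linarith
    have : -(1/x) + M/(N+x)^2 = (M*x - (N+x)^2)/(x*(N+x)^2) := by
      field_simp
      ring
    rw [this]
    exact div_neg_of_neg_of_pos hgx (mul_pos hxpos (pow_pos hNxpos 2))
  have hderiv_mid : ∀ x ∈ Ioo p₁ p₂, 0 < deriv f x := by
    intro x hx
    have hx0 : 0 < x := lt_trans h0 hx.1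
    rw [(hder x hx0).deriv]
    have hgx : 0 < M*x - (N+x)^2 := by
      rw [hfact x]; nlinarith [hx.1, hx.2]
    have hNxpos : 0 < N + x := by linarith
    have : -(1/x) + M/(N+x)^2 = (M*x - (N+x)^2)/(x*(N+x)^2) := by
      field_simp
      ring
    rw [this]
    exact div_pos hgx (mul_pos hx0 (pow_pos hNxpos 2))
  have hderiv_right : ∀ x ∈ Ioo p₂ (1:ℝ), deriv f x < 0 := by
    intro x hx
    have hx0 : 0 < x := lt_trans (lt_trans h0 h12) hx.1
    rw [(hder x hx0).deriv]
    have hgx : M*x - (N+x)^2 < 0 := by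
      rw [hfact x]; nlinarith [hx.1]
    have hNxpos : 0 < N + x := by linarith
    have : -(1/x) + M/(N+x)^2 = (M*x - (N+x)^2)/(x*(N+x)^2) := by
      field_simp
      ring
    rw [this]
    exact div_neg_of_neg_of_pos hgx (mul_pos hx0 (pow_pos hNxpos 2))
  -- continuity
  have hcont : ∀ s : Set ℝ, s ⊆ Ioi 0 → ContinuousOn f s := by
    intro s hs
    exact fun x hx => ((hder x (hs hx)).continuousAt).continuousWithinAt
  -- monotonicity
  have hanti1 : StrictAntiOn f (Ioc 0 p₁) := by
    apply strictAntiOn_of_deriv_neg (convex_Ioc 0 p₁)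
    · exact hcont _ (fun x hx => hx.1)
    · rw [interior_Ioc]; exact hderiv_left
  have hmono : StrictMonoOn f (Icc p₁ p₂) := by
    apply strictMonoOn_of_deriv_pos (convex_Icc p₁ p₂)
    · exact hcont _ (fun x hx => lt_of_lt_of_le h0 hx.1)
    · rw [interior_Icc]; exact hderiv_mid
  have hanti2 : StrictAntiOn f (Icc p₂ 1) := by
    apply strictAntiOn_of_deriv_neg (convex_Icc p₂ 1)
    · exact hcont _ (fun x hx => lt_of_lt_of_le (lt_trans h0 h12) hx.1)
    · rw [interior_Icc]; exact hderiv_right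
  -- small point with positive value
  set a : ℝ := min (p₁/2) (Real.exp (-(M/N + K + 1))) with ha_def
  have ha0 : 0 < a := lt_min (by linarith) (Real.exp_pos _)
  have hap : a < p₁ := lt_of_le_of_lt (min_le_left _ _) (by linarith)
  have hfa : 0 < f a := by
    rw [hf a]
    have hloga : Real.log a ≤ -(M/N + K + 1) := by
      calc Real.log a ≤ Real.log (Real.exp (-(M/N + K + 1))) :=
            Real.log_le_log ha0 (min_le_right _ _)
        _ = -(M/N + K + 1) := Real.log_exp _
    have hdiv : M/(N+a) ≤ M/N := by
      apply div_le_div_of_nonneg_left hM.le hN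
      linarith
    linarith
  -- f 1 < 0
  have hf1' : f 1 < 0 := by
    rw [hf 1]
    simp only [Real.log_one]
    have : 0 < M/(N+1) := by positivity
    linarith
  refine ⟨?_, ?_, ?_, ?_⟩
  · -- root in (0, p₁)
    have hsub : Ioo (f p₁) (f a) ⊆ f '' Ioo a p₁ :=
      intermediate_value_Ioo' hap.le (hcont _ (fun x hx => lt_of_lt_of_le ha0 hx.1))
    obtain ⟨c, hc, hfc⟩ := hsub ⟨hf1, hfa⟩
    refine ⟨c, ⟨⟨lt_trans ha0 hc.1, hc.2⟩, hfc⟩, ?_⟩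
    rintro y ⟨hy, hfy⟩
    exact hanti1.injOn ⟨hy.1, hy.2.le⟩ ⟨lt_trans ha0 hc.1, hc.2.le⟩ (hfy.trans hfc.symm)
  · -- root in (p₁, p₂)
    have hsub : Ioo (f p₁) (f p₂) ⊆ f '' Ioo p₁ p₂ :=
      intermediate_value_Ioo h12.le (hcont _ (fun x hx => lt_of_lt_of_le h0 hx.1))
    obtain ⟨c, hc, hfc⟩ := hsub ⟨hf1, hf2⟩
    refine ⟨c, ⟨hc, hfc⟩, ?_⟩
    rintro y ⟨hy, hfy⟩
    exact hmono.injOn ⟨hy.1.le, hy.2.le⟩ ⟨hc.1.le, hc.2.le⟩ (hfy.trans hfc.symm)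
  · -- root in (p₂, 1)
    have hsub : Ioo (f 1) (f p₂) ⊆ f '' Ioo p₂ 1 :=
      intermediate_value_Ioo' h21.le
        (hcont _ (fun x hx => lt_of_lt_of_le (lt_trans h0 h12) hx.1))
    obtain ⟨c, hc, hfc⟩ := hsub ⟨hf1', hf2⟩
    refine ⟨c, ⟨hc, hfc⟩, ?_⟩
    rintro y ⟨hy, hfy⟩
    exact hanti2.injOn ⟨hy.1.le, hy.2.le⟩ ⟨hc.1.le, hc.2.le⟩ (hfy.trans hfc.symm)
  · -- every root in (0,1) lies in one of the three intervals
    intro p hp hfp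
    have hne1 : p ≠ p₁ := by rintro rfl; linarith
    have hne2 : p ≠ p₂ := by rintro rfl; linarith
    rcases lt_trichotomy p p₁ with h | h | h
    · exact Or.inl (Or.inl ⟨hp.1, h⟩)
    · exact absurd h hne1
    · rcases lt_trichotomy p p₂ with h' | h' | h'
      · exact Or.inl (Or.inr ⟨h, h'⟩)
      · exact absurd h' hne2
      · exact Or.inr ⟨h', hp.2⟩
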